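/- Parametric basic lemma. Let (P,d) and (X,d) be metric spaces, let (p̄,x̄) ∈ P×X, and let ν: P×X → [0,+∞] be a function such that: (i) X is metrically complete; (ii) ν(p̄,x̄) = 0; (iii) the function p ↦ ν(p,x̄) is upper semicontinuous at p̄; (iv) there exists δ₁ > 0 such that for every p ∈ B(p̄,δ₁) the function x ↦ ν(p,x) is lower semicontinuous on X; (v) there exists δ₂ > 0 such that σ = inf{ |∇ₓν|(p,x) : (p,x) ∈ B(p̄,δ₂)×B(x̄,δ₂), ν(p,x) > 0 } > 0. Then there exist η > 0 and ζ > 0 such that: (t) {x ∈ X : ν(p,x) = 0} ∩ B(x̄,η) ≠ ∅ for every p ∈ B(p̄,ζ); and (tt) dist(x, {z ∈ X : ν(p,z) = 0}) ≤ ν(p,x)/σ for every (p,x) ∈ B(p̄,ζ)×B(x̄,η). -/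

import Mathlib

open Classical Metric Filter Set
open scoped ENNReal Topology

/-- Partial strong slope with respect to `x` of a function `ν : P × X → [0,∞]`:
`0` if `(p0,x0)` is a local minimizer of `ν`, otherwise
`limsup_{x → x0} (ν(p0,x0) − ν(p0,x)) / d(x,x0)`. -/
noncomputable def slopeX {P X : Type*} [PseudoMetricSpace P] [PseudoMetricSpace X]
    (ν : P → X → ℝ≥0∞) (p0 : P) (x0 : X) : ℝ≥0∞ :=
  if IsLocalMin (fun q : P × X => ν q.1 q.2) (p0, x0) then 0
  else Filter.limsup (fun x => (ν p0 x0 - ν p0 x) / edist x x0) (𝓝[≠] x0)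

private lemma ennreal_div_div_cancel {a b : ℝ≥0∞} (h0 : a ≠ 0) (ht : a ≠ ⊤) :
    a / (a / b) = b := by
  rw [div_eq_mul_inv, div_eq_mul_inv, ENNReal.mul_inv (Or.inl h0) (Or.inl ht), inv_inv,
    ← mul_assoc, ENNReal.mul_inv_cancel h0 ht, one_mul]

/-- Ekeland-type variational principle for `ℝ≥0∞`-valued lower semicontinuous functions. -/
private lemma ekeland_ennreal {X : Type*} [MetricSpace X] [CompleteSpace X]
    (f : X → ℝ≥0∞) (hf : LowerSemicontinuous f)
    (σ' : ℝ≥0∞) (hσ0 : σ' ≠ 0) (hσt : σ' ≠ ⊤)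
    (x₀ : X) (hx₀ : f x₀ ≠ ⊤) :
    ∃ y, edist y x₀ ≤ f x₀ / σ' ∧ ∀ z, f y ≤ f z + σ' * edist z y := by
  set S : X → Set X := fun x => {z | f z + σ' * edist z x ≤ f x} with hS
  have self_mem : ∀ x, x ∈ S x := fun x => by simp [hS]
  have htrans : ∀ {x y z : X}, y ∈ S x → z ∈ S y → z ∈ S x := by
    intro x y z hy hz
    have h1 : f z + σ' * edist z x ≤ (f z + σ' * edist z y) + σ' * edist y x := by
      rw [add_assoc, ← mul_add]
      exact add_le_add_right (mul_le_mul_right (edist_triangle _ _ _) σ') _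
    exact h1.trans ((add_le_add_left hz _).trans hy)
  have hle_of_mem : ∀ {x z : X}, z ∈ S x → f z ≤ f x := fun hz => le_self_add.trans hz
  have Hsel : ∀ x : X, f x ≠ ⊤ → ∀ n : ℕ, ∃ x', x' ∈ S x ∧
      ∀ z ∈ S x, f x' ≤ f z + 2⁻¹ ^ n := by
    intro x hx n
    set m : ℝ≥0∞ := ⨅ z ∈ S x, f z with hm
    have hmle : m ≤ f x := iInf₂_le x (self_mem x)
    have hlt : m < m + 2⁻¹ ^ n :=
      ENNReal.lt_add_right (hmle.trans_lt hx.lt_top).ne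
        (pow_ne_zero _ (ENNReal.inv_ne_zero.2 ENNReal.ofNat_ne_top))
    have hex : ∃ z ∈ S x, f z < m + 2⁻¹ ^ n := by
      by_contra hcon
      push_neg at hcon
      exact hlt.not_ge (le_iInf₂ hcon)
    obtain ⟨z, hzS, hz⟩ := hex
    exact ⟨z, hzS, fun w hw => hz.le.trans (add_le_add_left (iInf₂_le w hw) _)⟩
  choose g hg1 hg2 using Hsel
  let seq : ℕ → X := fun n => Nat.rec x₀ (fun k xk => if h : f xk = ⊤ then xk else g xk h k) n
  have hseq : ∀ n, seq (n + 1) = if h : f (seq n) = ⊤ then seq n else g (seq n) h n :=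
    fun n => rfl
  have hfin : ∀ n, f (seq n) ≠ ⊤ := by
    intro n; induction n with
    | zero => exact hx₀
    | succ k ih =>
      rw [hseq k, dif_neg ih]
      exact ((hle_of_mem (hg1 _ ih k)).trans_lt (lt_top_iff_ne_top.2 ih)).ne
  have hmem : ∀ n, seq (n + 1) ∈ S (seq n) := fun n => by
    rw [hseq n, dif_neg (hfin n)]; exact hg1 _ _ _
  have hsel2 : ∀ n, ∀ z ∈ S (seq n), f (seq (n + 1)) ≤ f z + 2⁻¹ ^ n := fun n => by
    rw [hseq n, dif_neg (hfin n)]; exact hg2 _ _ _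
  have hmem' : ∀ n m, n ≤ m → seq m ∈ S (seq n) := by
    intro n m h
    induction m, h using Nat.le_induction with
    | base => exact self_mem _
    | succ m hnm ih => exact htrans ih (hmem m)
  have hanti : Antitone fun n => f (seq n) :=
    antitone_nat_of_succ_le fun n => hle_of_mem (hmem n)
  set L : ℝ≥0∞ := ⨅ n, f (seq n) with hL
  have hLle : ∀ n, L ≤ f (seq n) := fun n => iInf_le _ n
  have hLt : L ≠ ⊤ := ((hLle 0).trans_lt (lt_top_iff_ne_top.2 (hfin 0))).ne
  have htend : Tendsto (fun n => f (seq n)) atTop (𝓝 L) := tendsto_atTop_iInf hanti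
  have hdist : ∀ n m, n ≤ m → σ' * edist (seq m) (seq n) ≤ f (seq n) - f (seq m) :=
    fun n m h => ENNReal.le_sub_of_add_le_left (hfin m) (hmem' n m h)
  have hcauchy : CauchySeq seq := by
    rw [EMetric.cauchySeq_iff]
    intro ε hε
    have hεσ : σ' * ε ≠ 0 := (ENNReal.mul_pos hσ0 hε.ne').ne'
    have hev : ∀ᶠ n in atTop, f (seq n) < L + σ' * ε :=
      htend.eventually_lt_const (ENNReal.lt_add_right hLt hεσ)
    obtain ⟨N, hN⟩ := eventually_atTop.1 hev
    refine ⟨N, fun m hm n hn => ?_⟩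
    have hkey : ∀ k l, N ≤ k → k ≤ l → edist (seq l) (seq k) < ε := by
      intro k l hk hkl
      have h1 : σ' * edist (seq l) (seq k) ≤ f (seq k) - f (seq l) := hdist k l hkl
      have h2 : f (seq k) - f (seq l) ≤ f (seq k) - L := tsub_le_tsub_left (hLle l) _
      have h3 : f (seq k) - L < σ' * ε := by
        rw [ENNReal.sub_lt_iff_lt_right hLt (hLle k), add_comm]
        exact hN k hk
      have h4 : σ' * edist (seq l) (seq k) < σ' * ε := (h1.trans h2).trans_lt h3
      exact (ENNReal.mul_lt_mul_iff_right hσ0 hσt).1 h4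
    rcases le_total n m with h | h
    · exact hkey n m hn h
    · rw [edist_comm]; exact hkey m n hm h
  obtain ⟨y, hy⟩ := cauchySeq_tendsto_of_complete hcauchy
  have hyS : ∀ n, y ∈ S (seq n) := by
    intro n
    have hlsc : LowerSemicontinuous fun z => f z + σ' * edist z (seq n) :=
      hf.add ((ENNReal.continuous_const_mul hσt).comp
        (continuous_id.edist continuous_const)).lowerSemicontinuous
    show f y + σ' * edist y (seq n) ≤ f (seq n)
    refine le_of_forall_lt fun c hc => ?_
    have h1 := hy.eventually (hlsc y c hc)
    obtain ⟨m, hm1, hm2⟩ := (h1.and (eventually_ge_atTop n)).exists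
    exact hm1.trans_le (hmem' n m hm2)
  refine ⟨y, ?_, ?_⟩
  · have hSy0 : f y + σ' * edist y x₀ ≤ f x₀ := hyS 0
    rw [ENNReal.le_div_iff_mul_le (Or.inl hσ0) (Or.inl hσt), mul_comm]
    exact le_add_self.trans hSy0
  · intro z
    by_cases hz : f z + σ' * edist z y ≤ f y
    · have hzn : ∀ n, z ∈ S (seq n) := fun n => htrans (hyS n) hz
      have hzt : f z ≠ ⊤ :=
        (((le_self_add.trans hz).trans (hle_of_mem (hyS 0))).trans_lt hx₀.lt_top).ne
      have hzb : ∀ n, σ' * edist z (seq (n + 1)) ≤ 2⁻¹ ^ n := by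
        intro n
        have h1 : f (seq (n + 1)) ≤ f z + 2⁻¹ ^ n := hsel2 n z (hzn n)
        have h2 : σ' * edist z (seq (n + 1)) ≤ f (seq (n + 1)) - f z :=
          ENNReal.le_sub_of_add_le_left hzt (hzn (n + 1))
        exact h2.trans (tsub_le_iff_right.2 (h1.trans (by rw [add_comm])))
      have htz : Tendsto (fun n => σ' * edist z (seq (n + 1))) atTop (𝓝 (σ' * edist z y)) :=
        ENNReal.Tendsto.const_mul
          (tendsto_const_nhds.edist (hy.comp (tendsto_add_atTop_nat 1))) (Or.inr hσt)
      have hpow : Tendsto (fun n : ℕ => (2⁻¹ : ℝ≥0∞) ^ n) atTop (𝓝 0) :=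
        ENNReal.tendsto_pow_atTop_nhds_zero_of_lt_one (ENNReal.inv_lt_one.2 ENNReal.one_lt_two)
      have hlim : σ' * edist z y ≤ 0 := le_of_tendsto_of_tendsto' htz hpow hzb
      have h0 : edist z y = 0 := by
        rcases mul_eq_zero.1 (le_antisymm hlim zero_le) with h | h
        · exact absurd h hσ0
        · exact h
      have hzy : z = y := edist_eq_zero.1 h0
      simp [hzy]
    · exact (not_le.1 hz).le

private lemma slopeX_le_of_min {P X : Type*} [MetricSpace P] [MetricSpace X]
    (ν : P → X → ℝ≥0∞) (p : P) (y : X) (σ' : ℝ≥0∞)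
    (h : ∀ z, ν p y ≤ ν p z + σ' * edist z y) :
    slopeX ν p y ≤ σ' := by
  unfold slopeX
  by_cases hmin : IsLocalMin (fun q : P × X => ν q.1 q.2) (p, y)
  · rw [if_pos hmin]; exact zero_le
  · rw [if_neg hmin]
    refine limsup_le_of_le (by isBoundedDefault) (Eventually.of_forall fun x => ?_)
    exact ENNReal.div_le_of_le_mul (tsub_le_iff_right.2 ((h x).trans (by rw [add_comm])))

/-- **Parametric basic lemma.** -/
theorem parametric_basic_lemma
    {P X : Type*} [MetricSpace P] [MetricSpace X] [CompleteSpace X]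
    (ν : P → X → ℝ≥0∞) (pbar : P) (xbar : X)
    (h2 : ν pbar xbar = 0)
    (h3 : UpperSemicontinuousAt (fun p => ν p xbar) pbar)
    (h4 : ∃ δ₁ > (0:ℝ), ∀ p ∈ closedBall pbar δ₁, LowerSemicontinuous (fun x => ν p x))
    (δ₂ : ℝ) (hδ₂ : 0 < δ₂) (σ : ℝ≥0∞)
    (hσdef : σ = ⨅ q : {q : P × X // q.1 ∈ closedBall pbar δ₂ ∧ q.2 ∈ closedBall xbar δ₂ ∧
        0 < ν q.1 q.2}, slopeX ν q.val.1 q.val.2)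
    (hσpos : 0 < σ) :
    ∃ η > (0:ℝ), ∃ ζ > (0:ℝ),
      (∀ p ∈ closedBall pbar ζ, ({x : X | ν p x = 0} ∩ closedBall xbar η).Nonempty) ∧
      (∀ p ∈ closedBall pbar ζ, ∀ x ∈ closedBall xbar η,
        EMetric.infEdist x {z : X | ν p z = 0} ≤ ν p x / σ) := by
  obtain ⟨δ₁, hδ₁, hlsc⟩ := h4
  set η : ℝ := δ₂ / 4 with hη
  have hηpos : 0 < η := by positivity
  set σ₀ : ℝ≥0∞ := if σ = ⊤ then 1 else σ / 2 with hσ₀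
  have hσ₀0 : σ₀ ≠ 0 := by
    rw [hσ₀]; split
    · exact one_ne_zero
    · simp only [ne_eq, ENNReal.div_eq_zero_iff, not_or]
      exact ⟨hσpos.ne', ENNReal.ofNat_ne_top⟩
  have hσ₀t : σ₀ ≠ ⊤ := by
    rw [hσ₀]; split
    · exact ENNReal.one_ne_top
    · next h => exact (ENNReal.div_lt_top h (by norm_num)).ne
  have hσ₀lt : σ₀ < σ := by
    rw [hσ₀]; split
    · next h => rw [h]; exact ENNReal.one_lt_top
    · next h => exact ENNReal.half_lt_self hσpos.ne' h
  set ε₀ : ℝ≥0∞ := σ₀ * ENNReal.ofReal η with hε₀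
  have hε₀0 : 0 < ε₀ := ENNReal.mul_pos hσ₀0 (ENNReal.ofReal_pos.2 hηpos).ne'
  have hε₀t : ε₀ ≠ ⊤ := ENNReal.mul_ne_top hσ₀t ENNReal.ofReal_ne_top
  have husc : ∀ᶠ p in 𝓝 pbar, ν p xbar < ε₀ := h3 ε₀ (by simpa only [h2] using hε₀0)
  obtain ⟨ζ₀, hζ₀pos, hζ₀⟩ := Metric.eventually_nhds_iff.1 husc
  set ζ : ℝ := min (ζ₀ / 2) (min δ₁ δ₂) with hζ
  have hζpos : 0 < ζ := lt_min (by positivity) (lt_min hδ₁ hδ₂)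
  have hζδ₁ : ζ ≤ δ₁ := (min_le_right _ _).trans (min_le_left _ _)
  have hζδ₂ : ζ ≤ δ₂ := (min_le_right _ _).trans (min_le_right _ _)
  have hζ_usc : ∀ p ∈ closedBall pbar ζ, ν p xbar < ε₀ := by
    intro p hp
    apply hζ₀
    have h1 : dist p pbar ≤ ζ := mem_closedBall.1 hp
    have h2 : ζ ≤ ζ₀ / 2 := min_le_left _ _
    linarith
  have key : ∀ p ∈ closedBall pbar ζ, ∀ σ' : ℝ≥0∞, σ' ≠ 0 → σ' ≠ ⊤ → σ' < σ →
      ∀ x₀ : X, dist x₀ xbar ≤ δ₂ → ν p x₀ ≠ ⊤ →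
      ν p x₀ / σ' ≤ ENNReal.ofReal (δ₂ - dist x₀ xbar) →
      ∃ y, ν p y = 0 ∧ edist x₀ y ≤ ν p x₀ / σ' := by
    intro p hp σ' h0 ht hlt x₀ hx₀ hfin hsmall
    obtain ⟨y, hy1, hy2⟩ := ekeland_ennreal (ν p)
      (hlsc p (closedBall_subset_closedBall hζδ₁ hp)) σ' h0 ht x₀ hfin
    have hyball : y ∈ closedBall xbar δ₂ := by
      have h1 : edist y x₀ ≤ ENNReal.ofReal (δ₂ - dist x₀ xbar) := hy1.trans hsmall
      have h2 : dist y x₀ ≤ δ₂ - dist x₀ xbar := (edist_le_ofReal (by linarith)).1 h1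
      have h3 : dist y xbar ≤ dist y x₀ + dist x₀ xbar := dist_triangle _ _ _
      exact mem_closedBall.2 (by linarith)
    have hslope : slopeX ν p y ≤ σ' := slopeX_le_of_min ν p y σ' hy2
    by_cases h0y : ν p y = 0
    · exact ⟨y, h0y, by rw [edist_comm]; exact hy1⟩
    · exfalso
      have hσle : σ ≤ slopeX ν p y := by
        rw [hσdef]
        exact iInf_le (fun q : {q : P × X // q.1 ∈ closedBall pbar δ₂ ∧
            q.2 ∈ closedBall xbar δ₂ ∧ 0 < ν q.1 q.2} => slopeX ν q.val.1 q.val.2)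
          ⟨(p, y), closedBall_subset_closedBall hζδ₂ hp, hyball, pos_iff_ne_zero.2 h0y⟩
      exact absurd (hσle.trans hslope) (not_le.2 hlt)
  have part_t : ∀ p ∈ closedBall pbar ζ, ∃ y, ν p y = 0 ∧ dist y xbar ≤ η := by
    intro p hp
    have husc' := hζ_usc p hp
    have hfin : ν p xbar ≠ ⊤ := (husc'.trans (lt_top_iff_ne_top.2 hε₀t)).ne
    have hdiv : ν p xbar / σ₀ ≤ ENNReal.ofReal η := by
      calc ν p xbar / σ₀ ≤ ε₀ / σ₀ := ENNReal.div_le_div_right husc'.le _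
        _ = ENNReal.ofReal η := by
          rw [hε₀, mul_comm, mul_div_assoc, ENNReal.div_self hσ₀0 hσ₀t, mul_one]
    obtain ⟨y, hy0, hy1⟩ := key p hp σ₀ hσ₀0 hσ₀t hσ₀lt xbar (by rw [dist_self]; linarith)
      hfin (hdiv.trans (by
        rw [dist_self, sub_zero]
        exact ENNReal.ofReal_le_ofReal (by rw [hη]; linarith)))
    refine ⟨y, hy0, ?_⟩
    have h1 : edist xbar y ≤ ENNReal.ofReal η := hy1.trans hdiv
    have h2 := (edist_le_ofReal hηpos.le).1 h1
    rwa [dist_comm]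
  refine ⟨η, hηpos, ζ, hζpos, fun p hp => ?_, fun p hp x hx => ?_⟩
  · obtain ⟨y, h0, h1⟩ := part_t p hp
    exact ⟨y, h0, mem_closedBall.2 h1⟩
  · obtain ⟨y₀, hy₀0, hy₀d⟩ := part_t p hp
    have hxd : dist x xbar ≤ η := mem_closedBall.1 hx
    by_cases hcase : ENNReal.ofReal (δ₂ / 2) ≤ ν p x / σ
    · calc EMetric.infEdist x {z : X | ν p z = 0} ≤ edist x y₀ :=
            EMetric.infEdist_le_edist_of_mem hy₀0
        _ ≤ ENNReal.ofReal (δ₂ / 2) := by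
            rw [edist_dist]
            apply ENNReal.ofReal_le_ofReal
            have h1 : dist x y₀ ≤ dist x xbar + dist y₀ xbar := dist_triangle_right _ _ _
            rw [hη] at hxd hy₀d
            linarith
        _ ≤ ν p x / σ := hcase
    · rw [not_le] at hcase
      apply ENNReal.le_of_forall_pos_le_add
      intro ε hε _
      have hεR : (0:ℝ) < (ε:ℝ) := hε
      by_cases ha0 : ν p x = 0
      · have hx0 : x ∈ {z : X | ν p z = 0} := ha0
        refine (le_of_eq (EMetric.infEdist_zero_of_mem hx0)).trans ?_
        exact zero_le
      by_cases hσtop : σ = ⊤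
      · have hgoal0 : ν p x / σ = 0 := by rw [hσtop, ENNReal.div_top]
        rw [hgoal0, zero_add]
        set r : ℝ := min ((ε : ℝ) / 2) η with hr
        have hrpos : 0 < r := lt_min (by positivity) hηpos
        have hrη : r ≤ η := min_le_right _ _
        have hεhalf : ENNReal.ofReal ((ε:ℝ)/2) + ENNReal.ofReal ((ε:ℝ)/2) ≤ (ε : ℝ≥0∞) := by
          rw [← ENNReal.ofReal_add (by positivity) (by positivity),
            ← ENNReal.ofReal_coe_nnreal]
          exact ENNReal.ofReal_le_ofReal (by linarith)
        have hx' : ∃ x' : X, dist x' x ≤ r ∧ ν p x' ≠ ⊤ := by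
          by_cases hat : ν p x = ⊤
          · by_contra hcon
            push_neg at hcon
            have hmemσ : σ ≤ slopeX ν p x := by
              rw [hσdef]
              exact iInf_le (fun q : {q : P × X // q.1 ∈ closedBall pbar δ₂ ∧
                  q.2 ∈ closedBall xbar δ₂ ∧ 0 < ν q.1 q.2} => slopeX ν q.val.1 q.val.2)
                ⟨(p, x), closedBall_subset_closedBall hζδ₂ hp,
                  closedBall_subset_closedBall (by rw [hη]; linarith) hx, by simp [hat]⟩
            have hsl0 : slopeX ν p x ≤ 0 := by
              unfold slopeX
              by_cases hm : IsLocalMin (fun q : P × X => ν q.1 q.2) (p, x)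
              · rw [if_pos hm]
              · rw [if_neg hm]
                refine limsup_le_of_le (by isBoundedDefault) ?_
                have hball : ∀ᶠ z in 𝓝 x, dist z x < r :=
                  Metric.eventually_nhds_iff.2 ⟨r, hrpos, fun y hy => hy⟩
                filter_upwards [eventually_nhdsWithin_of_eventually_nhds hball] with z hz
                rw [hcon z hz.le, hat, tsub_self, ENNReal.zero_div]
            exact absurd (hmemσ.trans hsl0) (not_le.2 hσpos)
          · exact ⟨x, by rw [dist_self]; exact hrpos.le, hat⟩
        obtain ⟨x', hx'd, hx'fin⟩ := hx'
        have hx'bar : dist x' xbar ≤ δ₂ / 2 := by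
          have h1 : dist x' xbar ≤ dist x' x + dist x xbar := dist_triangle _ _ _
          rw [hη] at hxd hrη
          linarith
        by_cases ha'0 : ν p x' = 0
        · have hmemz : x' ∈ {z : X | ν p z = 0} := ha'0
          calc EMetric.infEdist x {z : X | ν p z = 0} ≤ edist x x' :=
                EMetric.infEdist_le_edist_of_mem hmemz
            _ ≤ ENNReal.ofReal ((ε:ℝ)/2) := by
                rw [edist_dist]
                exact ENNReal.ofReal_le_ofReal
                  (by rw [dist_comm]; exact hx'd.trans (min_le_left _ _))
            _ ≤ (ε : ℝ≥0∞) := le_self_add.trans hεhalf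
        · set σ' : ℝ≥0∞ := ν p x' / ENNReal.ofReal r with hσ'
          have hr0 : ENNReal.ofReal r ≠ 0 := (ENNReal.ofReal_pos.2 hrpos).ne'
          have hσ'0 : σ' ≠ 0 := by
            rw [hσ']
            simp only [ne_eq, ENNReal.div_eq_zero_iff, not_or]
            exact ⟨ha'0, ENNReal.ofReal_ne_top⟩
          have hσ't : σ' ≠ ⊤ := by
            rw [hσ', ne_eq, ENNReal.div_eq_top]
            push_neg
            exact ⟨fun _ => hr0, fun h => absurd h hx'fin⟩
          have hσ'lt : σ' < σ := hσtop ▸ lt_top_iff_ne_top.2 hσ't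
          have hcalc : ν p x' / σ' = ENNReal.ofReal r := by
            rw [hσ', ennreal_div_div_cancel ha'0 hx'fin]
          obtain ⟨y, hy0, hyd⟩ := key p hp σ' hσ'0 hσ't hσ'lt x' (by linarith) hx'fin
            (by rw [hcalc]
                apply ENNReal.ofReal_le_ofReal
                rw [hη] at hrη
                linarith)
          calc EMetric.infEdist x {z : X | ν p z = 0} ≤ edist x y :=
                EMetric.infEdist_le_edist_of_mem hy0
            _ ≤ edist x x' + edist x' y := edist_triangle _ _ _
            _ ≤ ENNReal.ofReal ((ε:ℝ)/2) + ENNReal.ofReal ((ε:ℝ)/2) := by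
                apply add_le_add
                · rw [edist_dist]
                  exact ENNReal.ofReal_le_ofReal
                    (by rw [dist_comm]; exact hx'd.trans (min_le_left _ _))
                · exact (hyd.trans_eq hcalc).trans
                    (ENNReal.ofReal_le_ofReal (min_le_left _ _))
            _ ≤ (ε : ℝ≥0∞) := hεhalf
      · have haf : ν p x ≠ ⊤ := by
          intro h
          rw [h, ENNReal.top_div_of_ne_top hσtop] at hcase
          exact absurd hcase (not_lt.2 le_top)
        set e : ℝ≥0∞ := min (ε : ℝ≥0∞) (ENNReal.ofReal η) with he
        have he0 : e ≠ 0 := by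
          rw [he]
          exact (lt_min (ENNReal.coe_pos.2 hε) (ENNReal.ofReal_pos.2 hηpos)).ne'
        have het : e ≠ ⊤ := ((min_le_left _ _).trans_lt ENNReal.coe_lt_top).ne
        have hdt : ν p x / σ + e ≠ ⊤ :=
          ENNReal.add_ne_top.2 ⟨(hcase.trans ENNReal.ofReal_lt_top).ne, het⟩
        have hd0 : ν p x / σ + e ≠ 0 := by
          intro h
          exact he0 (by simpa using (add_eq_zero.1 h).2)
        set σ' : ℝ≥0∞ := ν p x / (ν p x / σ + e) with hσ'
        have hσ'0 : σ' ≠ 0 := by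
          rw [hσ']
          simp only [ne_eq, ENNReal.div_eq_zero_iff, not_or]
          exact ⟨ha0, hdt⟩
        have hσ't : σ' ≠ ⊤ := by
          rw [hσ', ne_eq, ENNReal.div_eq_top]
          push_neg
          exact ⟨fun _ => hd0, fun h => absurd h haf⟩
        have hσ'lt : σ' < σ := by
          rw [hσ', ENNReal.div_lt_iff (Or.inl hd0) (Or.inl hdt), mul_add,
            ENNReal.mul_div_cancel hσpos.ne' hσtop]
          exact ENNReal.lt_add_right haf (ENNReal.mul_pos hσpos.ne' he0).ne'
        have hcalc : ν p x / σ' = ν p x / σ + e := by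
          rw [hσ', ennreal_div_div_cancel ha0 haf]
        have hcons : ν p x / σ' ≤ ENNReal.ofReal (δ₂ - dist x xbar) := by
          rw [hcalc]
          calc ν p x / σ + e ≤ ENNReal.ofReal (δ₂ / 2) + ENNReal.ofReal η :=
                add_le_add hcase.le (min_le_right _ _)
            _ = ENNReal.ofReal (δ₂ / 2 + η) :=
                (ENNReal.ofReal_add (by positivity) hηpos.le).symm
            _ ≤ ENNReal.ofReal (δ₂ - dist x xbar) := by
                apply ENNReal.ofReal_le_ofReal
                rw [hη] at hxd ⊢
                linarith
        obtain ⟨y, hy0, hyd⟩ := key p hp σ' hσ'0 hσ't hσ'lt x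
          (by rw [hη] at hxd; linarith) haf hcons
        calc EMetric.infEdist x {z : X | ν p z = 0} ≤ edist x y :=
              EMetric.infEdist_le_edist_of_mem hy0
          _ ≤ ν p x / σ + e := hyd.trans_eq hcalc
          _ ≤ ν p x / σ + ε := add_le_add_right (min_le_left _ _) _
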